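/- NAPA are not closed under intersection: there exist a finite alphabet Σ and two NAPA A₁, A₂ over Σ with two directions such that no NAPA over Σ with two directions recognizes L(A₁) ∩ L(A₂). -/

import Mathlib

/-! ### Positive Boolean formulas -/

/-- Positive Boolean formulas over a set of atoms `Q`, built from atoms,
conjunction, disjunction and the constants true and false. -/
inductive PosBool (Q : Type u) : Type u
  | tt : PosBool Q
  | ff : PosBool Q
  | var : Q → PosBool Q
  | and : PosBool Q → PosBool Q → PosBool Q
  | or : PosBool Q → PosBool Q → PosBool Q

namespace PosBool

/-- `Sat C f` holds iff the valuation making exactly the elements of `C` true satisfies `f`. -/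
def Sat {Q : Type u} (C : Set Q) : PosBool Q → Prop
  | tt => True
  | ff => False
  | var q => q ∈ C
  | and f g => Sat C f ∧ Sat C g
  | or f g => Sat C f ∨ Sat C g

/-- A positive Boolean formula that is a disjunction of atoms. -/
inductive IsDisj {Q : Type u} : PosBool Q → Prop
  | ff : IsDisj ff
  | var (q : Q) : IsDisj (var q)
  | or {f g : PosBool Q} : IsDisj f → IsDisj g → IsDisj (f.or g)

/-- Syntactic size of a positive Boolean formula. -/
def size {Q : Type u} : PosBool Q → ℕ
  | tt => 1
  | ff => 1
  | var _ => 1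
  | and f g => size f + size g + 1
  | or f g => size f + size g + 1

end PosBool

/-! ### Alternating Asynchronous Parity Automata -/

/-- An Alternating Asynchronous Parity Automaton (AAPA) over the alphabet `σ`
with state set `Q` and `n` directions. -/
structure AAPA (σ : Type u) (Q : Type v) (n : ℕ) where
  init : PosBool Q
  trans : Q → σ → Fin n → PosBool Q
  prio : Q → ℕ

namespace AAPA

variable {σ : Type u} {Q : Type v} {n : ℕ}

/-- A run of an AAPA `A` on the tuple of `ω`-words `w`: a tree of nodes
(coded as lists of natural numbers, the root being `[]`), whose non-root nodes
are labeled with states and which carry offset counters, subject to the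
local consistency conditions of AAPA runs. -/
structure Run (A : AAPA σ Q n) (w : Fin n → ℕ → σ) where
  tree : Set (List ℕ)
  label : List ℕ → Q
  cnt : List ℕ → Fin n → ℕ
  root_mem : [] ∈ tree
  prefix_closed : ∀ (t : List ℕ) (m : ℕ), t ++ [m] ∈ tree → t ∈ tree
  has_child : ∀ t ∈ tree, ∃ m : ℕ, t ++ [m] ∈ tree
  cnt_init : ∀ t ∈ tree, t.length ≤ 1 → cnt t = 0
  init_sat : PosBool.Sat {q | ∃ m : ℕ, [m] ∈ tree ∧ label [m] = q} A.init
  step : ∀ t ∈ tree, t ≠ [] → ∃ d : Fin n,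
    (∀ m : ℕ, t ++ [m] ∈ tree →
      cnt (t ++ [m]) = Function.update (cnt t) d (cnt t d + 1)) ∧
    PosBool.Sat {q | ∃ m : ℕ, t ++ [m] ∈ tree ∧ label (t ++ [m]) = q}
      (A.trans (label t) (w d (cnt t d)) d)

variable {A : AAPA σ Q n} {w : Fin n → ℕ → σ}

/-- An infinite path through a run, starting at the root. -/
def Run.IsPath (r : A.Run w) (p : ℕ → List ℕ) : Prop :=
  p 0 = [] ∧ ∀ i : ℕ, (∃ m : ℕ, p (i + 1) = p i ++ [m]) ∧ p (i + 1) ∈ r.tree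

/-- A run is accepting iff on every infinite path the least priority occurring
infinitely often is even. -/
def Run.Accepting (r : A.Run w) : Prop :=
  ∀ p : ℕ → List ℕ, r.IsPath p →
    Even (sInf {c : ℕ | ∀ N : ℕ, ∃ i : ℕ, N ≤ i ∧ A.prio (r.label (p i)) = c})

/-- The language of an AAPA: the set of tuples of `ω`-words on which it has an
accepting run. -/
def lang (A : AAPA σ Q n) : Set (Fin n → ℕ → σ) :=
  {w | ∃ r : A.Run w, r.Accepting}

/-- A Nondeterministic Asynchronous Parity Automaton (NAPA) is an AAPA whose
initial condition and transitions are disjunctions of states. -/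
def IsNondet (A : AAPA σ Q n) : Prop :=
  A.init.IsDisj ∧ ∀ (q : Q) (a : σ) (d : Fin n), (A.trans q a d).IsDisj

end AAPA

namespace PosBool

lemma sat_mono {Q : Type u} {C C' : Set Q} (h : C ⊆ C') :
    ∀ {f : PosBool Q}, Sat C f → Sat C' f
  | tt, _ => trivial
  | ff, hf => hf.elim
  | var q, hq => h hq
  | and f g, ⟨hf, hg⟩ => ⟨sat_mono h hf, sat_mono h hg⟩
  | or f g, hfg => hfg.elim (fun hf => Or.inl (sat_mono h hf))
      (fun hg => Or.inr (sat_mono h hg))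

lemma isDisj_extract {Q : Type u} {f : PosBool Q} (hf : f.IsDisj) {C : Set Q}
    (hC : Sat C f) : ∃ x ∈ C, Sat ({x} : Set Q) f := by
  induction hf with
  | ff => exact hC.elim
  | var q => exact ⟨q, hC, rfl⟩
  | or hf hg ihf ihg =>
    rcases hC with h | h
    · obtain ⟨x, hx, hs⟩ := ihf h; exact ⟨x, hx, Or.inl hs⟩
    · obtain ⟨x, hx, hs⟩ := ihg h; exact ⟨x, hx, Or.inr hs⟩

end PosBool

/-- The set of values occurring infinitely often in `f`. -/
def infOcc (f : ℕ → ℕ) : Set ℕ := {k | ∀ N : ℕ, ∃ i : ℕ, N ≤ i ∧ f i = k}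

lemma infOcc_shift (f g : ℕ → ℕ) (a b : ℕ) (h : ∀ i, f (a + i) = g (b + i)) :
    infOcc f = infOcc g := by
  ext k
  constructor
  · intro hk N
    obtain ⟨i, hi, he⟩ := hk (a + b + N)
    refine ⟨b + (i - a), by omega, ?_⟩
    have h2 := h (i - a)
    rw [show a + (i - a) = i by omega] at h2
    rw [← h2]; exact he
  · intro hk N
    obtain ⟨i, hi, he⟩ := hk (a + b + N)
    refine ⟨a + (i - b), by omega, ?_⟩
    have h2 := h (i - b)
    rw [show b + (i - b) = i by omega] at h2
    rw [h2]; exact he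

lemma infOcc_succ (f : ℕ → ℕ) : infOcc (fun i => f (i + 1)) = infOcc f :=
  infOcc_shift _ f 0 1 (fun i => by simp [Nat.add_comm])

namespace AAPA

variable {σ : Type u} {Q : Type v} {n : ℕ}

/-- Linear-run characterization of the language of a NAPA. -/
theorem mem_lang_iff (A : AAPA σ Q n) (hA : A.IsNondet) (w : Fin n → ℕ → σ) :
    w ∈ A.lang ↔ ∃ (q : ℕ → Q) (d : ℕ → Fin n) (c : ℕ → Fin n → ℕ),
      c 0 = 0 ∧
      (∀ i, c (i + 1) = Function.update (c i) (d i) (c i (d i) + 1)) ∧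
      PosBool.Sat ({q 0} : Set Q) A.init ∧
      (∀ i, PosBool.Sat ({q (i + 1)} : Set Q)
        (A.trans (q i) (w (d i) (c i (d i))) (d i))) ∧
      Even (sInf (infOcc (fun i => A.prio (q i)))) := by
  constructor
  · rintro ⟨r, hacc⟩
    -- the root has a child labeled with a disjunct of init
    obtain ⟨x0, hx0, hsx0⟩ := PosBool.isDisj_extract hA.1 r.init_sat
    obtain ⟨m0, hm0, hlm0⟩ := hx0
    -- every nonroot node has a distinguished successor
    have key : ∀ t : {t : List ℕ // t ∈ r.tree ∧ t ≠ []},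
        ∃ (t' : {t : List ℕ // t ∈ r.tree ∧ t ≠ []}) (d : Fin n),
          (∃ m : ℕ, t'.1 = t.1 ++ [m]) ∧
          r.cnt t'.1 = Function.update (r.cnt t.1) d (r.cnt t.1 d + 1) ∧
          PosBool.Sat ({r.label t'.1} : Set Q)
            (A.trans (r.label t.1) (w d (r.cnt t.1 d)) d) := by
      rintro ⟨t, ht, hne⟩
      obtain ⟨d, hupd, hsat⟩ := r.step t ht hne
      obtain ⟨x, hx, hsx⟩ := PosBool.isDisj_extract (hA.2 _ _ _) hsat
      obtain ⟨m, hm, he⟩ := hx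
      refine ⟨⟨t ++ [m], hm, by simp⟩, d, ⟨m, rfl⟩, hupd m hm, ?_⟩
      rw [he]; exact hsx
    choose F dd hF1 hF2 hF3 using key
    set t0 : {t : List ℕ // t ∈ r.tree ∧ t ≠ []} := ⟨[m0], hm0, by simp⟩ with ht0
    set node : ℕ → {t : List ℕ // t ∈ r.tree ∧ t ≠ []} := fun i => F^[i] t0 with hnode
    have hnode_succ : ∀ i, node (i + 1) = F (node i) := fun i =>
      Function.iterate_succ_apply' F i t0
    refine ⟨fun i => r.label (node i).1, fun i => dd (node i),
      fun i => r.cnt (node i).1, ?_, ?_, ?_, ?_, ?_⟩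
    · exact r.cnt_init [m0] hm0 (by simp)
    · intro i
      show r.cnt (node (i + 1)).1 = Function.update (r.cnt (node i).1)
        (dd (node i)) (r.cnt (node i).1 (dd (node i)) + 1)
      rw [hnode_succ]; exact hF2 (node i)
    · show PosBool.Sat ({r.label (node 0).1} : Set Q) A.init
      rw [show r.label (node 0).1 = x0 from hlm0]; exact hsx0
    · intro i
      show PosBool.Sat ({r.label (node (i + 1)).1} : Set Q)
        (A.trans (r.label (node i).1)
          (w (dd (node i)) (r.cnt (node i).1 (dd (node i)))) (dd (node i)))
      rw [hnode_succ]; exact hF3 (node i)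
    · -- acceptance along the extracted path
      set p : ℕ → List ℕ := fun i => Nat.rec [] (fun j _ => (node j).1) i with hp
      have hpath : r.IsPath p := by
        constructor
        · rfl
        · intro i
          cases i with
          | zero => exact ⟨⟨m0, rfl⟩, hm0⟩
          | succ j =>
            refine ⟨?_, (node (j + 1)).2.1⟩
            rw [show p (j + 1 + 1) = (node (j + 1)).1 from rfl, hnode_succ]
            exact hF1 (node j)
      have h1 : Even (sInf (infOcc (fun i => A.prio (r.label (p i))))) :=
        hacc p hpath
      have hset : infOcc (fun i => A.prio (r.label (p i)))
          = infOcc (fun i => A.prio (r.label (node i).1)) :=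
        infOcc_shift _ _ 1 0 (fun i => by
          rw [Nat.add_comm 1 i, Nat.zero_add])
      rw [hset] at h1
      exact h1
  · rintro ⟨q, d, c, hc0, hcs, hinit, htrans, hpar⟩
    have hrep : ∀ (t : List ℕ) (i : ℕ), t = List.replicate i 0 → i = t.length := by
      intro t i h; rw [h, List.length_replicate]
    refine ⟨⟨{t | ∃ i : ℕ, t = List.replicate i 0},
      fun t => q (t.length - 1), fun t => c (t.length - 1),
      ⟨0, rfl⟩, ?_, ?_, ?_, ?_, ?_⟩, ?_⟩
    · rintro t m ⟨i, hi⟩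
      cases i with
      | zero => simp at hi
      | succ j =>
        rw [List.replicate_succ'] at hi
        obtain ⟨h1, h2⟩ := List.append_inj hi (by
          have := congrArg List.length hi
          simp [List.length_replicate] at this ⊢; omega)
        exact ⟨j, h1⟩
    · rintro t ⟨i, hi⟩
      exact ⟨0, ⟨i + 1, by rw [hi, List.replicate_succ']⟩⟩
    · intro t ht hlen
      show c (t.length - 1) = 0
      have h9 : t.length - 1 = 0 := by omega
      rw [h9, hc0]
    · refine PosBool.sat_mono ?_ hinit
      rintro x rfl
      exact ⟨0, ⟨1, rfl⟩, rfl⟩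
    · rintro t ⟨i, hi⟩ hne
      cases i with
      | zero => rw [hi] at hne; simp at hne
      | succ j =>
        have hlen : t.length = j + 1 := by rw [hi, List.length_replicate]
        refine ⟨d j, ?_, ?_⟩
        · rintro m -
          show c ((t ++ [m]).length - 1) = Function.update (c (t.length - 1))
            (d j) (c (t.length - 1) (d j) + 1)
          simp only [List.length_append, List.length_singleton, hlen]
          rw [show j + 1 + 1 - 1 = j + 1 by omega, show j + 1 - 1 = j by omega]
          exact hcs j
        · have hq9 : q (t.length - 1) = q j := congrArg q (by omega)
          have hc9 : c (t.length - 1) (d j) = c j (d j) :=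
            congrFun (congrArg c (by omega)) (d j)
          show PosBool.Sat _ (A.trans (q (t.length - 1))
            (w (d j) (c (t.length - 1) (d j))) (d j))
          rw [hq9, hc9]
          refine PosBool.sat_mono ?_ (htrans j)
          rintro x rfl
          refine ⟨0, ⟨j + 2, ?_⟩, ?_⟩
          · rw [hi, ← List.replicate_succ']
          · simp [hlen]
    · intro p hpath
      have hforced : ∀ i, p i = List.replicate i 0 := by
        intro i
        induction i with
        | zero => exact hpath.1
        | succ j ih =>
          obtain ⟨⟨m, hm⟩, hmem⟩ := hpath.2 j
          obtain ⟨k, hk⟩ := hmem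
          have : k = j + 1 := by
            have := congrArg List.length hk
            simp [hm, ih] at this; omega
          rw [hk, this]
      have hset : infOcc (fun i => A.prio (q ((p i).length - 1)))
          = infOcc (fun i => A.prio (q i)) :=
        infOcc_shift _ _ 1 0 (fun i => by
          rw [Nat.add_comm 1 i, hforced (i + 1), Nat.zero_add]
          simp)
      have h1 : Even (sInf (infOcc (fun i => A.prio (q i)))) := hpar
      rw [← hset] at h1
      exact h1

end AAPA

namespace PosBool

@[simp] lemma sat_tt {Q : Type u} {C : Set Q} : Sat C (tt : PosBool Q) ↔ True := Iff.rfl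
@[simp] lemma sat_ff {Q : Type u} {C : Set Q} : Sat C (ff : PosBool Q) ↔ False := Iff.rfl
@[simp] lemma sat_var {Q : Type u} {C : Set Q} {x : Q} : Sat C (var x) ↔ x ∈ C := Iff.rfl

end PosBool

lemma infOcc_eventually_const (f : ℕ → ℕ) (k M : ℕ) (h : ∀ i, M ≤ i → f i = k) :
    infOcc f = {k} := by
  ext x
  constructor
  · intro hx
    obtain ⟨i, hi, he⟩ := hx M
    rw [← he, h i hi]; rfl
  · rintro rfl
    intro N
    exact ⟨max N M, le_max_left _ _, h _ (le_max_right _ _)⟩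

lemma even_sInf_of_eventually_zero (f : ℕ → ℕ) (M : ℕ) (h : ∀ i, M ≤ i → f i = 0) :
    Even (sInf (infOcc f)) := by
  rw [infOcc_eventually_const f 0 M h, csInf_singleton]
  exact Even.zero

section Counters

variable {m : ℕ} {d : ℕ → Fin m} {c : ℕ → Fin m → ℕ}

lemma cnt_self (hcs : ∀ i, c (i + 1) = Function.update (c i) (d i) (c i (d i) + 1))
    (i : ℕ) : c (i + 1) (d i) = c i (d i) + 1 := by
  rw [hcs i, Function.update_self]

lemma cnt_other (hcs : ∀ i, c (i + 1) = Function.update (c i) (d i) (c i (d i) + 1))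
    (i : ℕ) {e : Fin m} (he : e ≠ d i) : c (i + 1) e = c i e := by
  rw [hcs i, Function.update_of_ne he]

lemma cnt_le_succ (hcs : ∀ i, c (i + 1) = Function.update (c i) (d i) (c i (d i) + 1))
    (i : ℕ) (e : Fin m) : c i e ≤ c (i + 1) e := by
  by_cases he : e = d i
  · subst he; rw [cnt_self hcs]; omega
  · rw [cnt_other hcs i he]

lemma cnt_succ_le (hcs : ∀ i, c (i + 1) = Function.update (c i) (d i) (c i (d i) + 1))
    (i : ℕ) (e : Fin m) : c (i + 1) e ≤ c i e + 1 := by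
  by_cases he : e = d i
  · subst he; rw [cnt_self hcs]
  · rw [cnt_other hcs i he]; omega

lemma cnt_mono (hcs : ∀ i, c (i + 1) = Function.update (c i) (d i) (c i (d i) + 1))
    {i j : ℕ} (hij : i ≤ j) (e : Fin m) : c i e ≤ c j e := by
  induction j with
  | zero => simp_all
  | succ k ih =>
    rcases Nat.lt_or_ge i (k + 1) with h | h
    · exact le_trans (ih (by omega)) (cnt_le_succ hcs k e)
    · have : i = k + 1 := by omega
      subst this; rfl

end Counters

namespace NapaCE

/-- `a^n b a^n b^ω` (with `a = false`, `b = true`). -/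
def u (n : ℕ) : ℕ → Bool := fun i => decide (i = n ∨ 2 * n < i)

/-- `a^n b^ω`. -/
def v (n : ℕ) : ℕ → Bool := fun i => decide (n ≤ i)

/-- The intersection language. -/
def L : Set (Fin 2 → ℕ → Bool) := {w | ∃ p : ℕ, w = ![u p, v p]}

/-- First NAPA: accepts `(w₁, w₂)` iff for some `n`, `w₁ ∈ aⁿb·Σ^ω` and `w₂ = aⁿb^ω`. -/
def A1 : AAPA Bool (Fin 3) 2 where
  init := .var 0
  trans := fun q σ d =>
    if d = 0 then (if q = 0 then (if σ then .var 2 else .var 1) else .ff)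
    else if q = 1 then (if σ then .ff else .var 0)
    else if q = 2 then (if σ then .var 2 else .ff)
    else .ff
  prio := fun q => if q = 2 then 0 else 1

/-- Second NAPA: accepts `(w₁, w₂)` iff for some `n, m`,
`w₁ = aⁿb aᵐ b^ω` and `w₂ ∈ aᵐb·Σ^ω`. -/
def A2 : AAPA Bool (Fin 5) 2 where
  init := .var 0
  trans := fun q σ d =>
    if d = 0 then
      (if q = 0 then (if σ then .var 1 else .var 0)
       else if q = 1 then (if σ then .var 3 else .var 2)
       else if q = 4 then (if σ then .var 4 else .ff)
       else .ff)
    else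
      (if q = 2 then (if σ then .ff else .var 1)
       else if q = 3 then (if σ then .var 4 else .ff)
       else .ff)
  prio := fun q => if q = 4 then 0 else 1

lemma A1_nondet : A1.IsNondet := by
  constructor
  · exact .var 0
  · intro q a d
    show PosBool.IsDisj (if d = 0 then _ else _)
    split_ifs <;> first
      | exact PosBool.IsDisj.ff
      | exact PosBool.IsDisj.var _

lemma A2_nondet : A2.IsNondet := by
  constructor
  · exact .var 0
  · intro q a d
    show PosBool.IsDisj (if d = 0 then _ else _)
    split_ifs <;> first
      | exact PosBool.IsDisj.ff
      | exact PosBool.IsDisj.var _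

end NapaCE

lemma fin2_funext {α : Sort _} {f g : Fin 2 → α} (h0 : f 0 = g 0) (h1 : f 1 = g 1) :
    f = g := by
  funext e
  fin_cases e
  · exact h0
  · exact h1

namespace NapaCE

/-! ### The canonical runs of `A1` and `A2` on `(uᵖ, vᵖ)` -/

def q1 (p i : ℕ) : Fin 3 :=
  if i ≤ 2*p then (if i % 2 = 0 then 0 else 1) else 2
def d1 (p i : ℕ) : Fin 2 :=
  if i ≤ 2*p then (if i % 2 = 0 then 0 else 1) else 1
def c1 (p i : ℕ) : Fin 2 → ℕ :=
  if i ≤ 2*p then ![(i+1)/2, i/2] else ![p+1, i - (p+1)]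

lemma c1_zero (p : ℕ) : c1 p 0 = 0 := by
  apply fin2_funext <;> simp [c1]

lemma c1_rec (p i : ℕ) :
    c1 p (i+1) = Function.update (c1 p i) (d1 p i) (c1 p i (d1 p i) + 1) := by
  have e10 : (1 : Fin 2) ≠ 0 := by decide
  have e01 : (0 : Fin 2) ≠ 1 := by decide
  rcases lt_trichotomy i (2*p) with h | h | h
  · by_cases h2 : i % 2 = 0
    · have hd : d1 p i = 0 := by simp [d1, h2, Nat.le_of_lt h]
      rw [hd]
      apply fin2_funext
      · rw [Function.update_self]
        simp only [c1, if_pos (show i + 1 ≤ 2*p by omega), if_pos (Nat.le_of_lt h),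
          Matrix.cons_val_zero]
        omega
      · rw [Function.update_of_ne e10]
        simp only [c1, if_pos (show i + 1 ≤ 2*p by omega), if_pos (Nat.le_of_lt h),
          Matrix.cons_val_one, Matrix.head_cons, Matrix.cons_val_zero]
        omega
    · have hd : d1 p i = 1 := by simp [d1, h2, Nat.le_of_lt h]
      rw [hd]
      apply fin2_funext
      · rw [Function.update_of_ne e01]
        simp only [c1, if_pos (show i + 1 ≤ 2*p by omega), if_pos (Nat.le_of_lt h),
          Matrix.cons_val_zero]
        omega
      · rw [Function.update_self]
        simp only [c1, if_pos (show i + 1 ≤ 2*p by omega), if_pos (Nat.le_of_lt h),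
          Matrix.cons_val_one, Matrix.head_cons, Matrix.cons_val_zero]
        omega
  · have h2 : i % 2 = 0 := by omega
    have hd : d1 p i = 0 := by simp [d1, h2, Nat.le_of_eq h]
    rw [hd]
    apply fin2_funext
    · rw [Function.update_self]
      simp only [c1, if_neg (show ¬ (i + 1 ≤ 2*p) by omega), if_pos (Nat.le_of_eq h),
        Matrix.cons_val_zero]
      omega
    · rw [Function.update_of_ne e10]
      simp only [c1, if_neg (show ¬ (i + 1 ≤ 2*p) by omega), if_pos (Nat.le_of_eq h),
        Matrix.cons_val_one, Matrix.head_cons, Matrix.cons_val_zero]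
      omega
  · have hd : d1 p i = 1 := by simp [d1, show ¬ (i ≤ 2*p) by omega]
    rw [hd]
    apply fin2_funext
    · rw [Function.update_of_ne e01]
      simp only [c1, if_neg (show ¬ (i + 1 ≤ 2*p) by omega), if_neg (show ¬ (i ≤ 2*p) by omega),
        Matrix.cons_val_zero]
    · rw [Function.update_self]
      simp only [c1, if_neg (show ¬ (i + 1 ≤ 2*p) by omega), if_neg (show ¬ (i ≤ 2*p) by omega),
        Matrix.cons_val_one, Matrix.head_cons, Matrix.cons_val_zero]
      omega

lemma sat1 (p i : ℕ) :
    PosBool.Sat ({q1 p (i+1)} : Set (Fin 3))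
      (A1.trans (q1 p i) ((![u p, v p] : Fin 2 → ℕ → Bool) (d1 p i) (c1 p i (d1 p i)))
        (d1 p i)) := by
  rcases lt_trichotomy i (2*p) with h | h | h
  · by_cases h2 : i % 2 = 0
    · have hd : d1 p i = 0 := by simp [d1, h2, Nat.le_of_lt h]
      have hq : q1 p i = 0 := by simp [q1, h2, Nat.le_of_lt h]
      have hq' : q1 p (i+1) = 1 := by
        simp only [q1, if_pos (show i + 1 ≤ 2*p by omega),
          if_neg (show ¬ ((i+1) % 2 = 0) by omega)]
      have hc : c1 p i (0 : Fin 2) = (i+1)/2 := by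
        simp [c1, Nat.le_of_lt h]
      have hl : u p ((i+1)/2) = false := by
        simp only [u, decide_eq_false_iff_not]
        omega
      rw [hd, hq, hq', hc]
      simp only [Matrix.cons_val_zero, hl]
      simp [A1]
    · have hd : d1 p i = 1 := by simp [d1, h2, Nat.le_of_lt h]
      have hq : q1 p i = 1 := by simp [q1, h2, Nat.le_of_lt h]
      have hq' : q1 p (i+1) = 0 := by
        simp only [q1, if_pos (show i + 1 ≤ 2*p by omega),
          if_pos (show (i+1) % 2 = 0 by omega)]
      have hc : c1 p i (1 : Fin 2) = i/2 := by
        simp [c1, Nat.le_of_lt h]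
      have hl : v p (i/2) = false := by
        simp only [v, decide_eq_false_iff_not]
        omega
      rw [hd, hq, hq', hc]
      simp only [Matrix.cons_val_one, Matrix.head_cons, Matrix.cons_val_zero, hl]
      simp [A1]
  · have h2 : i % 2 = 0 := by omega
    have hd : d1 p i = 0 := by simp [d1, h2, Nat.le_of_eq h]
    have hq : q1 p i = 0 := by simp [q1, h2, Nat.le_of_eq h]
    have hq' : q1 p (i+1) = 2 := by
      simp only [q1, if_neg (show ¬ (i + 1 ≤ 2*p) by omega)]
    have hc : c1 p i (0 : Fin 2) = p := by
      simp only [c1, if_pos (Nat.le_of_eq h), Matrix.cons_val_zero]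
      omega
    have hl : u p p = true := by simp [u]
    rw [hd, hq, hq', hc]
    simp only [Matrix.cons_val_zero, hl]
    simp [A1]
  · have hd : d1 p i = 1 := by simp [d1, show ¬ (i ≤ 2*p) by omega]
    have hq : q1 p i = 2 := by simp [q1, show ¬ (i ≤ 2*p) by omega]
    have hq' : q1 p (i+1) = 2 := by
      simp only [q1, if_neg (show ¬ (i + 1 ≤ 2*p) by omega)]
    have hc : c1 p i (1 : Fin 2) = i - (p+1) := by
      simp only [c1, if_neg (show ¬ (i ≤ 2*p) by omega), Matrix.cons_val_one, Matrix.head_cons, Matrix.cons_val_zero]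
    have hl : v p (i - (p+1)) = true := by
      simp only [v, decide_eq_true_eq]
      omega
    rw [hd, hq, hq', hc]
    simp only [Matrix.cons_val_one, Matrix.head_cons, Matrix.cons_val_zero, hl]
    simp [A1]

lemma mem_A1 (p : ℕ) : (![u p, v p] : Fin 2 → ℕ → Bool) ∈ A1.lang := by
  rw [AAPA.mem_lang_iff A1 A1_nondet]
  refine ⟨q1 p, d1 p, c1 p, c1_zero p, c1_rec p, ?_, sat1 p, ?_⟩
  · have h0 : q1 p 0 = 0 := by simp [q1]
    simp [A1, h0]
  · apply even_sInf_of_eventually_zero _ (2*p+1)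
    intro i hi
    have h2 : q1 p i = 2 := by simp [q1, show ¬ (i ≤ 2*p) by omega]
    simp [A1, h2]

end NapaCE

namespace NapaCE

def q2 (p i : ℕ) : Fin 5 :=
  if i ≤ p then 0
  else if i ≤ 3*p+1 then (if (i - (p+1)) % 2 = 0 then 1 else 2)
  else if i = 3*p+2 then 3 else 4
def d2 (p i : ℕ) : Fin 2 :=
  if i ≤ p then 0
  else if i ≤ 3*p+1 then (if (i - (p+1)) % 2 = 0 then 0 else 1)
  else if i = 3*p+2 then 1 else 0
def c2 (p i : ℕ) : Fin 2 → ℕ :=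
  if i ≤ p then ![i, 0]
  else if i ≤ 3*p+2 then ![p+1+(i-p)/2, (i-(p+1))/2]
  else ![i-p-1, p+1]

lemma c2_zero (p : ℕ) : c2 p 0 = 0 := by
  apply fin2_funext <;> simp [c2]

lemma c2_rec (p i : ℕ) :
    c2 p (i+1) = Function.update (c2 p i) (d2 p i) (c2 p i (d2 p i) + 1) := by
  have e10 : (1 : Fin 2) ≠ 0 := by decide
  have e01 : (0 : Fin 2) ≠ 1 := by decide
  rcases Nat.lt_or_ge i p with h | h
  · have hd : d2 p i = 0 := by simp [d2, Nat.le_of_lt h]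
    rw [hd]
    apply fin2_funext
    · rw [Function.update_self]
      simp only [c2, if_pos (show i + 1 ≤ p by omega), if_pos (Nat.le_of_lt h),
        Matrix.cons_val_zero]
    · rw [Function.update_of_ne e10]
      simp only [c2, if_pos (show i + 1 ≤ p by omega), if_pos (Nat.le_of_lt h),
        Matrix.cons_val_one, Matrix.head_cons, Matrix.cons_val_zero]
  · by_cases hp : i = p
    · have hd : d2 p i = 0 := by simp [d2, Nat.le_of_eq hp]
      rw [hd]
      apply fin2_funext
      · rw [Function.update_self]
        simp only [c2, if_neg (show ¬ (i + 1 ≤ p) by omega),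
          if_pos (show i + 1 ≤ 3*p+2 by omega), if_pos (Nat.le_of_eq hp),
          Matrix.cons_val_zero]
        omega
      · rw [Function.update_of_ne e10]
        simp only [c2, if_neg (show ¬ (i + 1 ≤ p) by omega),
          if_pos (show i + 1 ≤ 3*p+2 by omega), if_pos (Nat.le_of_eq hp),
          Matrix.cons_val_one, Matrix.head_cons, Matrix.cons_val_zero]
        omega
    · have hpi : p < i := by omega
      by_cases h3 : i ≤ 3*p+1
      · by_cases ht : (i - (p+1)) % 2 = 0
        · have hd : d2 p i = 0 := by
            simp [d2, show ¬ (i ≤ p) by omega, h3, ht]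
          rw [hd]
          apply fin2_funext
          · rw [Function.update_self]
            simp only [c2, if_neg (show ¬ (i + 1 ≤ p) by omega),
              if_neg (show ¬ (i ≤ p) by omega),
              if_pos (show i + 1 ≤ 3*p+2 by omega), if_pos (show i ≤ 3*p+2 by omega),
              Matrix.cons_val_zero]
            omega
          · rw [Function.update_of_ne e10]
            simp only [c2, if_neg (show ¬ (i + 1 ≤ p) by omega),
              if_neg (show ¬ (i ≤ p) by omega),
              if_pos (show i + 1 ≤ 3*p+2 by omega), if_pos (show i ≤ 3*p+2 by omega),
              Matrix.cons_val_one, Matrix.head_cons, Matrix.cons_val_zero]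
            omega
        · have hd : d2 p i = 1 := by
            simp [d2, show ¬ (i ≤ p) by omega, h3, ht]
          rw [hd]
          apply fin2_funext
          · rw [Function.update_of_ne e01]
            simp only [c2, if_neg (show ¬ (i + 1 ≤ p) by omega),
              if_neg (show ¬ (i ≤ p) by omega),
              if_pos (show i + 1 ≤ 3*p+2 by omega), if_pos (show i ≤ 3*p+2 by omega),
              Matrix.cons_val_zero]
            omega
          · rw [Function.update_self]
            simp only [c2, if_neg (show ¬ (i + 1 ≤ p) by omega),
              if_neg (show ¬ (i ≤ p) by omega),
              if_pos (show i + 1 ≤ 3*p+2 by omega), if_pos (show i ≤ 3*p+2 by omega),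
              Matrix.cons_val_one, Matrix.head_cons, Matrix.cons_val_zero]
            omega
      · by_cases h5 : i = 3*p+2
        · have hd : d2 p i = 1 := by
            simp only [d2, if_neg (show ¬ (i ≤ p) by omega),
              if_neg (show ¬ (i ≤ 3*p+1) by omega), if_pos h5]
          rw [hd]
          apply fin2_funext
          · rw [Function.update_of_ne e01]
            simp only [c2, if_neg (show ¬ (i + 1 ≤ p) by omega),
              if_neg (show ¬ (i ≤ p) by omega),
              if_neg (show ¬ (i + 1 ≤ 3*p+2) by omega), if_pos (show i ≤ 3*p+2 by omega),
              Matrix.cons_val_zero]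
            omega
          · rw [Function.update_self]
            simp only [c2, if_neg (show ¬ (i + 1 ≤ p) by omega),
              if_neg (show ¬ (i ≤ p) by omega),
              if_neg (show ¬ (i + 1 ≤ 3*p+2) by omega), if_pos (show i ≤ 3*p+2 by omega),
              Matrix.cons_val_one, Matrix.head_cons, Matrix.cons_val_zero]
            omega
        · have h6 : 3*p+3 ≤ i := by omega
          have hd : d2 p i = 0 := by
            simp only [d2, if_neg (show ¬ (i ≤ p) by omega),
              if_neg (show ¬ (i ≤ 3*p+1) by omega), if_neg h5]
          rw [hd]
          apply fin2_funext
          · rw [Function.update_self]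
            simp only [c2, if_neg (show ¬ (i + 1 ≤ p) by omega),
              if_neg (show ¬ (i ≤ p) by omega),
              if_neg (show ¬ (i + 1 ≤ 3*p+2) by omega), if_neg (show ¬ (i ≤ 3*p+2) by omega),
              Matrix.cons_val_zero]
            omega
          · rw [Function.update_of_ne e10]
            simp only [c2, if_neg (show ¬ (i + 1 ≤ p) by omega),
              if_neg (show ¬ (i ≤ p) by omega),
              if_neg (show ¬ (i + 1 ≤ 3*p+2) by omega), if_neg (show ¬ (i ≤ 3*p+2) by omega),
              Matrix.cons_val_one, Matrix.head_cons, Matrix.cons_val_zero]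

lemma sat2 (p i : ℕ) :
    PosBool.Sat ({q2 p (i+1)} : Set (Fin 5))
      (A2.trans (q2 p i) ((![u p, v p] : Fin 2 → ℕ → Bool) (d2 p i) (c2 p i (d2 p i)))
        (d2 p i)) := by
  rcases Nat.lt_or_ge i p with h | h
  · have hd : d2 p i = 0 := by simp [d2, Nat.le_of_lt h]
    have hq : q2 p i = 0 := by simp [q2, Nat.le_of_lt h]
    have hq' : q2 p (i+1) = 0 := by simp [q2, show i + 1 ≤ p by omega]
    have hc : c2 p i (0 : Fin 2) = i := by
      simp [c2, Nat.le_of_lt h]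
    have hl : u p i = false := by
      simp only [u, decide_eq_false_iff_not]; omega
    rw [hd, hq, hq', hc]
    simp only [Matrix.cons_val_zero, hl]
    simp [A2]
  · by_cases hp : i = p
    · have hd : d2 p i = 0 := by simp [d2, Nat.le_of_eq hp]
      have hq : q2 p i = 0 := by simp [q2, Nat.le_of_eq hp]
      have hq' : q2 p (i+1) = 1 := by
        simp only [q2, if_neg (show ¬ (i + 1 ≤ p) by omega),
          if_pos (show i + 1 ≤ 3*p+1 by omega), if_pos (show (i+1-(p+1)) % 2 = 0 by omega)]
      have hc : c2 p i (0 : Fin 2) = p := by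
        simp only [c2, if_pos (Nat.le_of_eq hp), Matrix.cons_val_zero]
        omega
      have hl : u p p = true := by simp [u]
      rw [hd, hq, hq', hc]
      simp only [Matrix.cons_val_zero, hl]
      simp [A2]
    · have hpi : p < i := by omega
      by_cases h3 : i ≤ 3*p+1
      · by_cases ht : (i - (p+1)) % 2 = 0
        · have hd : d2 p i = 0 := by
            simp [d2, show ¬ (i ≤ p) by omega, h3, ht]
          have hq : q2 p i = 1 := by
            simp [q2, show ¬ (i ≤ p) by omega, h3, ht]
          have hc : c2 p i (0 : Fin 2) = p+1+(i-p)/2 := by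
            simp [c2, show ¬ (i ≤ p) by omega, show i ≤ 3*p+2 by omega]
          by_cases hlast : i = 3*p+1
          · have hq' : q2 p (i+1) = 3 := by
              simp only [q2, if_neg (show ¬ (i + 1 ≤ p) by omega),
                if_neg (show ¬ (i + 1 ≤ 3*p+1) by omega), if_pos (show i + 1 = 3*p+2 by omega)]
            have hl : u p (p+1+(i-p)/2) = true := by
              simp only [u, decide_eq_true_eq]
              omega
            rw [hd, hq, hq', hc]
            simp only [Matrix.cons_val_zero, hl]
            simp [A2]
          · have hq' : q2 p (i+1) = 2 := by
              simp only [q2, if_neg (show ¬ (i + 1 ≤ p) by omega),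
                if_pos (show i + 1 ≤ 3*p+1 by omega),
                if_neg (show ¬ ((i+1-(p+1)) % 2 = 0) by omega)]
            have hl : u p (p+1+(i-p)/2) = false := by
              simp only [u, decide_eq_false_iff_not]
              omega
            rw [hd, hq, hq', hc]
            simp only [Matrix.cons_val_zero, hl]
            simp [A2]
        · have hd : d2 p i = 1 := by
            simp [d2, show ¬ (i ≤ p) by omega, h3, ht]
          have hq : q2 p i = 2 := by
            simp [q2, show ¬ (i ≤ p) by omega, h3, ht]
          have hq' : q2 p (i+1) = 1 := by
            simp only [q2, if_neg (show ¬ (i + 1 ≤ p) by omega),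
              if_pos (show i + 1 ≤ 3*p+1 by omega),
              if_pos (show (i+1-(p+1)) % 2 = 0 by omega)]
          have hc : c2 p i (1 : Fin 2) = (i-(p+1))/2 := by
            simp [c2, show ¬ (i ≤ p) by omega, show i ≤ 3*p+2 by omega]
          have hl : v p ((i-(p+1))/2) = false := by
            simp only [v, decide_eq_false_iff_not]
            omega
          rw [hd, hq, hq', hc]
          simp only [Matrix.cons_val_one, Matrix.head_cons, Matrix.cons_val_zero, hl]
          simp [A2]
      · by_cases h5 : i = 3*p+2
        · have hd : d2 p i = 1 := by
            simp only [d2, if_neg (show ¬ (i ≤ p) by omega),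
              if_neg (show ¬ (i ≤ 3*p+1) by omega), if_pos h5]
          have hq : q2 p i = 3 := by
            simp only [q2, if_neg (show ¬ (i ≤ p) by omega),
              if_neg (show ¬ (i ≤ 3*p+1) by omega), if_pos h5]
          have hq' : q2 p (i+1) = 4 := by
            simp only [q2, if_neg (show ¬ (i + 1 ≤ p) by omega),
              if_neg (show ¬ (i + 1 ≤ 3*p+1) by omega),
              if_neg (show ¬ (i + 1 = 3*p+2) by omega)]
          have hc : c2 p i (1 : Fin 2) = p := by
            simp only [c2, if_neg (show ¬ (i ≤ p) by omega),
              if_pos (show i ≤ 3*p+2 by omega), Matrix.cons_val_one, Matrix.head_cons, Matrix.cons_val_zero]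
            omega
          have hl : v p p = true := by simp [v]
          rw [hd, hq, hq', hc]
          simp only [Matrix.cons_val_one, Matrix.head_cons, Matrix.cons_val_zero, hl]
          simp [A2]
        · have h6 : 3*p+3 ≤ i := by omega
          have hd : d2 p i = 0 := by
            simp only [d2, if_neg (show ¬ (i ≤ p) by omega),
              if_neg (show ¬ (i ≤ 3*p+1) by omega), if_neg h5]
          have hq : q2 p i = 4 := by
            simp only [q2, if_neg (show ¬ (i ≤ p) by omega),
              if_neg (show ¬ (i ≤ 3*p+1) by omega), if_neg h5]
          have hq' : q2 p (i+1) = 4 := by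
            simp only [q2, if_neg (show ¬ (i + 1 ≤ p) by omega),
              if_neg (show ¬ (i + 1 ≤ 3*p+1) by omega),
              if_neg (show ¬ (i + 1 = 3*p+2) by omega)]
          have hc : c2 p i (0 : Fin 2) = i-p-1 := by
            simp [c2, show ¬ (i ≤ p) by omega, show ¬ (i ≤ 3*p+2) by omega]
          have hl : u p (i-p-1) = true := by
            simp only [u, decide_eq_true_eq]
            omega
          rw [hd, hq, hq', hc]
          simp only [Matrix.cons_val_zero, hl]
          simp [A2]

lemma mem_A2 (p : ℕ) : (![u p, v p] : Fin 2 → ℕ → Bool) ∈ A2.lang := by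
  rw [AAPA.mem_lang_iff A2 A2_nondet]
  refine ⟨q2 p, d2 p, c2 p, c2_zero p, c2_rec p, ?_, sat2 p, ?_⟩
  · have h0 : q2 p 0 = 0 := by simp [q2]
    simp [A2, h0]
  · apply even_sInf_of_eventually_zero _ (3*p+3)
    intro i hi
    have h4 : q2 p i = 4 := by
      simp [q2, show ¬ (i ≤ p) by omega, show ¬ (i ≤ 3*p+1) by omega,
        show ¬ (i = 3*p+2) by omega]
    simp [A2, h4]

end NapaCE

lemma fin2_or (e : Fin 2) : e = 0 ∨ e = 1 := by
  fin_cases e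
  · exact Or.inl rfl
  · exact Or.inr rfl

lemma fin5_or (e : Fin 5) : e = 0 ∨ e = 1 ∨ e = 2 ∨ e = 3 ∨ e = 4 := by
  fin_cases e <;> simp

namespace NapaCE

lemma A1_sound (w : Fin 2 → ℕ → Bool) (hw : w ∈ A1.lang) :
    ∃ n : ℕ, (∀ j, j < n → w 0 j = false ∧ w 1 j = false) ∧ w 0 n = true ∧
      (∀ j, n ≤ j → w 1 j = true) := by
  rw [AAPA.mem_lang_iff A1 A1_nondet] at hw
  obtain ⟨q, d, c, hc0, hcs, hinit, htrans, hpar⟩ := hw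
  have hq0 : q 0 = 0 := by
    simpa [A1, eq_comm] using hinit
  have F0 : ∀ i, q i = 0 → d i = 0 ∧
      ((w 0 (c i 0) = false ∧ q (i+1) = 1) ∨ (w 0 (c i 0) = true ∧ q (i+1) = 2)) := by
    intro i hq
    have h := htrans i
    rw [hq] at h
    rcases fin2_or (d i) with hd | hd <;> rw [hd] at h ⊢
    · cases hl : w 0 (c i 0) <;> rw [hl] at h <;> simp [A1] at h
      · exact ⟨rfl, Or.inl ⟨rfl, h.symm⟩⟩
      · exact ⟨rfl, Or.inr ⟨rfl, h.symm⟩⟩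
    · simp [A1] at h
  have F1 : ∀ i, q i = 1 → d i = 1 ∧ w 1 (c i 1) = false ∧ q (i+1) = 0 := by
    intro i hq
    have h := htrans i
    rw [hq] at h
    rcases fin2_or (d i) with hd | hd <;> rw [hd] at h ⊢
    · simp [A1] at h
    · cases hl : w 1 (c i 1) <;> rw [hl] at h <;> simp [A1] at h
      exact ⟨rfl, rfl, h.symm⟩
  have F2 : ∀ i, q i = 2 → d i = 1 ∧ w 1 (c i 1) = true ∧ q (i+1) = 2 := by
    intro i hq
    have h := htrans i
    rw [hq] at h
    rcases fin2_or (d i) with hd | hd <;> rw [hd] at h ⊢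
    · simp [A1] at h
    · cases hl : w 1 (c i 1) <;> rw [hl] at h <;> simp [A1] at h
      exact ⟨rfl, rfl, h.symm⟩
  -- the run must reach state 2
  have hex2 : ∃ i, q i = 2 := by
    by_contra hno
    push_neg at hno
    have hone : ∀ i, (0:ℕ) ≤ i → A1.prio (q i) = 1 := by
      intro i _
      simp [A1, hno i]
    rw [infOcc_eventually_const _ 1 0 hone, csInf_singleton] at hpar
    norm_num at hpar
  set N := Nat.find hex2 with hNdef
  have hN2 : q N = 2 := Nat.find_spec hex2
  have hNmin : ∀ i, i < N → q i ≠ 2 := fun i hi => Nat.find_min hex2 hi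
  have hN1 : 1 ≤ N := by
    rcases Nat.eq_zero_or_pos N with h | h
    · rw [h] at hN2; rw [hq0] at hN2; exact absurd hN2 (by decide)
    · exact h
  -- invariant before N
  have inv : ∀ i, i < N → (q i = if i % 2 = 0 then 0 else 1) ∧
      c i 0 = (i+1)/2 ∧ c i 1 = i/2 := by
    intro i
    induction i with
    | zero =>
      intro _
      refine ⟨by simpa using hq0, by rw [hc0]; rfl, by rw [hc0]; rfl⟩
    | succ j ih =>
      intro hj
      have hjN : j < N := by omega
      obtain ⟨hqj, hcj0, hcj1⟩ := ih hjN
      by_cases h2 : j % 2 = 0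
      · rw [if_pos h2] at hqj
        obtain ⟨hd, hor⟩ := F0 j hqj
        rcases hor with ⟨hl, hq'⟩ | ⟨hl, hq'⟩
        · refine ⟨?_, ?_, ?_⟩
          · rw [if_neg (show ¬ ((j+1) % 2 = 0) by omega)]; exact hq'
          · rw [hcs j, hd, Function.update_self, hcj0]; omega
          · rw [hcs j, hd, Function.update_of_ne (by decide : (1:Fin 2) ≠ 0), hcj1]
            omega
        · exact absurd hq' (hNmin (j+1) hj)
      · rw [if_neg h2] at hqj
        obtain ⟨hd, hl, hq'⟩ := F1 j hqj
        refine ⟨?_, ?_, ?_⟩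
        · rw [if_pos (show (j+1) % 2 = 0 by omega)]; exact hq'
        · rw [hcs j, hd, Function.update_of_ne (by decide : (0:Fin 2) ≠ 1), hcj0]
          omega
        · rw [hcs j, hd, Function.update_self, hcj1]; omega
  -- the step into N
  obtain ⟨hqN1, hcN10, hcN11⟩ := inv (N-1) (by omega)
  have hNeven : (N-1) % 2 = 0 ∧ w 0 (c (N-1) 0) = true ∧ d (N-1) = 0 := by
    by_cases h2 : (N-1) % 2 = 0
    · rw [if_pos h2] at hqN1
      obtain ⟨hd, hor⟩ := F0 _ hqN1
      rcases hor with ⟨hl, hq'⟩ | ⟨hl, hq'⟩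
      · rw [show N - 1 + 1 = N by omega] at hq'
        rw [hq'] at hN2
        exact absurd hN2 (by decide)
      · exact ⟨h2, hl, hd⟩
    · rw [if_neg h2] at hqN1
      obtain ⟨hd, hl, hq'⟩ := F1 _ hqN1
      rw [show N - 1 + 1 = N by omega] at hq'
      rw [hq'] at hN2
      exact absurd hN2 (by decide)
  obtain ⟨hpar2, hlet, hdN1⟩ := hNeven
  set n := (N-1)/2 with hn
  have hNn : N = 2*n + 1 := by omega
  refine ⟨n, ?_, ?_, ?_⟩
  · intro j hj
    constructor
    · have h2j : 2*j < N := by omega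
      obtain ⟨hqj, hcj0, hcj1⟩ := inv (2*j) h2j
      rw [if_pos (by omega)] at hqj
      obtain ⟨hd, hor⟩ := F0 _ hqj
      rcases hor with ⟨hl, hq'⟩ | ⟨hl, hq'⟩
      · rw [hcj0, show (2*j+1)/2 = j by omega] at hl; exact hl
      · exact absurd hq' (hNmin (2*j+1) (by omega))
    · have h2j : 2*j+1 < N := by omega
      obtain ⟨hqj, hcj0, hcj1⟩ := inv (2*j+1) h2j
      rw [if_neg (by omega)] at hqj
      obtain ⟨hd, hl, hq'⟩ := F1 _ hqj
      rw [hcj1, show (2*j+1)/2 = j by omega] at hl; exact hl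
  · rw [hcN10, show (N-1+1)/2 = n by omega] at hlet; exact hlet
  · -- tail: state 2 forever, counter 1 sweeps [n, ∞)
    have tail : ∀ t, q (N+t) = 2 ∧ c (N+t) 1 = n + t := by
      intro t
      induction t with
      | zero =>
        refine ⟨by simpa using hN2, ?_⟩
        have h := hcs (N-1)
        rw [show N - 1 + 1 = N by omega] at h
        rw [show N + 0 = N by omega, h, hdN1,
          Function.update_of_ne (by decide : (1:Fin 2) ≠ 0), hcN11]
        omega
      | succ t ih =>
        obtain ⟨hqt, hct⟩ := ih
        obtain ⟨hd, hl, hq'⟩ := F2 _ hqt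
        refine ⟨by rw [show N+(t+1) = (N+t)+1 by omega]; exact hq', ?_⟩
        rw [show N+(t+1) = (N+t)+1 by omega, hcs (N+t), hd, Function.update_self, hct]
        omega
    intro j hj
    obtain ⟨hqt, hct⟩ := tail (j - n)
    obtain ⟨hd, hl, hq'⟩ := F2 _ hqt
    rw [hct, show n + (j - n) = j by omega] at hl
    exact hl

end NapaCE

namespace NapaCE

lemma A2_sound (w : Fin 2 → ℕ → Bool) (hw : w ∈ A2.lang) :
    ∃ n m : ℕ, (∀ j, j < n → w 0 j = false) ∧ w 0 n = true ∧
      (∀ j, j < m → w 0 (n+1+j) = false ∧ w 1 j = false) ∧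
      w 0 (n+1+m) = true ∧ w 1 m = true ∧ (∀ j, n+m+2 ≤ j → w 0 j = true) := by
  rw [AAPA.mem_lang_iff A2 A2_nondet] at hw
  obtain ⟨q, d, c, hc0, hcs, hinit, htrans, hpar⟩ := hw
  have hq0 : q 0 = 0 := by
    simpa [A2, eq_comm] using hinit
  have F0 : ∀ i, q i = 0 → d i = 0 ∧
      ((w 0 (c i 0) = false ∧ q (i+1) = 0) ∨ (w 0 (c i 0) = true ∧ q (i+1) = 1)) := by
    intro i hq
    have h := htrans i
    rw [hq] at h
    rcases fin2_or (d i) with hd | hd <;> rw [hd] at h ⊢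
    · cases hl : w 0 (c i 0) <;> rw [hl] at h <;> simp [A2] at h
      · exact ⟨rfl, Or.inl ⟨rfl, h.symm⟩⟩
      · exact ⟨rfl, Or.inr ⟨rfl, h.symm⟩⟩
    · simp [A2] at h
  have F1 : ∀ i, q i = 1 → d i = 0 ∧
      ((w 0 (c i 0) = false ∧ q (i+1) = 2) ∨ (w 0 (c i 0) = true ∧ q (i+1) = 3)) := by
    intro i hq
    have h := htrans i
    rw [hq] at h
    rcases fin2_or (d i) with hd | hd <;> rw [hd] at h ⊢
    · cases hl : w 0 (c i 0) <;> rw [hl] at h <;> simp [A2] at h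
      · exact ⟨rfl, Or.inl ⟨rfl, h.symm⟩⟩
      · exact ⟨rfl, Or.inr ⟨rfl, h.symm⟩⟩
    · simp [A2] at h
  have F2 : ∀ i, q i = 2 → d i = 1 ∧ w 1 (c i 1) = false ∧ q (i+1) = 1 := by
    intro i hq
    have h := htrans i
    rw [hq] at h
    rcases fin2_or (d i) with hd | hd <;> rw [hd] at h ⊢
    · simp [A2] at h
    · cases hl : w 1 (c i 1) <;> rw [hl] at h <;> simp [A2] at h
      exact ⟨rfl, rfl, h.symm⟩
  have F3 : ∀ i, q i = 3 → d i = 1 ∧ w 1 (c i 1) = true ∧ q (i+1) = 4 := by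
    intro i hq
    have h := htrans i
    rw [hq] at h
    rcases fin2_or (d i) with hd | hd <;> rw [hd] at h ⊢
    · simp [A2] at h
    · cases hl : w 1 (c i 1) <;> rw [hl] at h <;> simp [A2] at h
      exact ⟨rfl, rfl, h.symm⟩
  have F4 : ∀ i, q i = 4 → d i = 0 ∧ w 0 (c i 0) = true ∧ q (i+1) = 4 := by
    intro i hq
    have h := htrans i
    rw [hq] at h
    rcases fin2_or (d i) with hd | hd <;> rw [hd] at h ⊢
    · cases hl : w 0 (c i 0) <;> rw [hl] at h <;> simp [A2] at h
      exact ⟨rfl, rfl, h.symm⟩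
    · simp [A2] at h
  -- the run must reach state 4
  have hex4 : ∃ i, q i = 4 := by
    by_contra hno
    push_neg at hno
    have hone : ∀ i, (0:ℕ) ≤ i → A2.prio (q i) = 1 := by
      intro i _
      simp [A2, hno i]
    rw [infOcc_eventually_const _ 1 0 hone, csInf_singleton] at hpar
    norm_num at hpar
  set N := Nat.find hex4 with hNdef
  have hN4 : q N = 4 := Nat.find_spec hex4
  have hNmin : ∀ i, i < N → q i ≠ 4 := fun i hi => Nat.find_min hex4 hi
  have tail4 : ∀ t, q (N+t) = 4 := by
    intro t
    induction t with
    | zero => simpa using hN4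
    | succ t ih =>
      rw [show N+(t+1) = (N+t)+1 by omega]
      exact (F4 _ ih).2.2
  have hN1 : 1 ≤ N := by
    rcases Nat.eq_zero_or_pos N with h | h
    · rw [h] at hN4; rw [hq0] at hN4; exact absurd hN4 (by decide)
    · exact h
  -- the predecessor of N is in state 3
  have hqN1 : q (N-1) = 3 := by
    have hNr : N - 1 + 1 = N := by omega
    rcases fin5_or (q (N-1)) with h | h | h | h | h
    · obtain ⟨_, hor⟩ := F0 _ h
      rcases hor with ⟨_, hq'⟩ | ⟨_, hq'⟩ <;> rw [hNr, hN4] at hq' <;>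
        exact absurd hq'.symm (by decide)
    · obtain ⟨_, hor⟩ := F1 _ h
      rcases hor with ⟨_, hq'⟩ | ⟨_, hq'⟩ <;> rw [hNr, hN4] at hq' <;>
        exact absurd hq'.symm (by decide)
    · obtain ⟨_, _, hq'⟩ := F2 _ h
      rw [hNr, hN4] at hq'; exact absurd hq'.symm (by decide)
    · exact h
    · exact absurd h (hNmin _ (by omega))
  -- state 3 occurs only at time N-1
  have hq3unique : ∀ i, q i = 3 → i = N - 1 := by
    intro i hi
    have h4 := (F3 i hi).2.2
    have hle : N ≤ i + 1 := Nat.find_min' hex4 h4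
    have hlt : i < N := by
      by_contra hge
      push_neg at hge
      have := tail4 (i - N)
      rw [show N + (i - N) = i by omega] at this
      rw [this] at hi; exact absurd hi (by decide)
    omega
  have hN2 : 2 ≤ N := by
    rcases Nat.lt_or_ge N 2 with h | h
    · have : N - 1 = 0 := by omega
      rw [this, hq0] at hqN1
      exact absurd hqN1 (by decide)
    · exact h
  -- the predecessor of N-1 is in state 1
  have hqN2 : q (N-2) = 1 ∧ w 0 (c (N-2) 0) = true ∧ d (N-2) = 0 := by
    have hNr : N - 2 + 1 = N - 1 := by omega
    rcases fin5_or (q (N-2)) with h | h | h | h | h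
    · obtain ⟨_, hor⟩ := F0 _ h
      rcases hor with ⟨_, hq'⟩ | ⟨_, hq'⟩ <;> rw [hNr, hqN1] at hq' <;>
        exact absurd hq'.symm (by decide)
    · obtain ⟨hd, hor⟩ := F1 _ h
      rcases hor with ⟨_, hq'⟩ | ⟨hl, _⟩
      · rw [hNr, hqN1] at hq'; exact absurd hq'.symm (by decide)
      · exact ⟨h, hl, hd⟩
    · obtain ⟨_, _, hq'⟩ := F2 _ h
      rw [hNr, hqN1] at hq'; exact absurd hq'.symm (by decide)
    · have := hq3unique _ h; omega
    · exact absurd h (hNmin _ (by omega))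
  -- the first time in state 1
  have hex1 : ∃ i, q i = 1 := ⟨N-2, hqN2.1⟩
  set A := Nat.find hex1 with hAdef
  have hA1 : q A = 1 := Nat.find_spec hex1
  have hAmin : ∀ i, i < A → q i ≠ 1 := fun i hi => Nat.find_min hex1 hi
  -- phase 1 invariant
  have inv1 : ∀ i, i < A → q i = 0 ∧ c i 0 = i ∧ c i 1 = 0 := by
    intro i
    induction i with
    | zero => intro _; exact ⟨hq0, by rw [hc0]; rfl, by rw [hc0]; rfl⟩
    | succ j ih =>
      intro hj
      obtain ⟨hqj, hcj0, hcj1⟩ := ih (by omega)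
      obtain ⟨hd, hor⟩ := F0 j hqj
      rcases hor with ⟨hl, hq'⟩ | ⟨hl, hq'⟩
      · refine ⟨hq', ?_, ?_⟩
        · rw [hcs j, hd, Function.update_self, hcj0]
        · rw [hcs j, hd, Function.update_of_ne (by decide : (1:Fin 2) ≠ 0), hcj1]
      · exact absurd hq' (hAmin (j+1) hj)
  have hA0 : 1 ≤ A := by
    rcases Nat.eq_zero_or_pos A with h | h
    · rw [h, hq0] at hA1; exact absurd hA1 (by decide)
    · exact h
  -- the step into A
  have bdryA : w 0 (A-1) = true ∧ c A 0 = A ∧ c A 1 = 0 := by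
    obtain ⟨hqj, hcj0, hcj1⟩ := inv1 (A-1) (by omega)
    obtain ⟨hd, hor⟩ := F0 _ hqj
    have hAr : A - 1 + 1 = A := by omega
    rcases hor with ⟨hl, hq'⟩ | ⟨hl, hq'⟩
    · rw [hAr, hA1] at hq'; exact absurd hq'.symm (by decide)
    · have h := hcs (A-1)
      rw [hAr] at h
      refine ⟨by rwa [hcj0] at hl, ?_, ?_⟩
      · rw [h, hd, Function.update_self, hcj0]; omega
      · rw [h, hd, Function.update_of_ne (by decide : (1:Fin 2) ≠ 0), hcj1]
  -- phase 2 invariant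
  have inv2 : ∀ t, A + t ≤ N - 2 → (q (A+t) = if t % 2 = 0 then 1 else 2) ∧
      c (A+t) 0 = A + (t+1)/2 ∧ c (A+t) 1 = t/2 := by
    intro t
    induction t with
    | zero =>
      intro _
      refine ⟨by simpa using hA1, by simpa using bdryA.2.1, by
        simpa using bdryA.2.2⟩
    | succ t ih =>
      intro ht
      obtain ⟨hqt, h0, h1⟩ := ih (by omega)
      have hstep : A + (t+1) = (A+t) + 1 := by omega
      by_cases h2 : t % 2 = 0
      · rw [if_pos h2] at hqt
        obtain ⟨hd, hor⟩ := F1 _ hqt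
        rcases hor with ⟨hl, hq'⟩ | ⟨hl, hq'⟩
        · refine ⟨?_, ?_, ?_⟩
          · rw [hstep, if_neg (show ¬ ((t+1) % 2 = 0) by omega)]; exact hq'
          · rw [hstep, hcs (A+t), hd, Function.update_self, h0]; omega
          · rw [hstep, hcs (A+t), hd,
              Function.update_of_ne (by decide : (1:Fin 2) ≠ 0), h1]
            omega
        · exfalso
          have := hq3unique _ hq'
          omega
      · rw [if_neg h2] at hqt
        obtain ⟨hd, hl, hq'⟩ := F2 _ hqt
        refine ⟨?_, ?_, ?_⟩
        · rw [hstep, if_pos (show (t+1) % 2 = 0 by omega)]; exact hq'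
        · rw [hstep, hcs (A+t), hd,
            Function.update_of_ne (by decide : (0:Fin 2) ≠ 1), h0]
          omega
        · rw [hstep, hcs (A+t), hd, Function.update_self, h1]; omega
  have hAN : A ≤ N - 2 := Nat.find_min' hex1 hqN2.1
  -- parity of the phase-2 length
  have hm2 : (N - 2 - A) % 2 = 0 := by
    obtain ⟨hqt, _, _⟩ := inv2 (N-2-A) (by omega)
    rw [show A + (N-2-A) = N-2 by omega] at hqt
    by_cases h2 : (N-2-A) % 2 = 0
    · exact h2
    · rw [if_neg h2, hqN2.1] at hqt
      exact absurd hqt (by decide)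
  set m := (N - 2 - A) / 2 with hmdef
  have hm : N - 2 = A + 2*m := by omega
  -- counters at N-2, N-1, N
  obtain ⟨_, hcN20, hcN21⟩ := inv2 (N-2-A) (by omega)
  rw [show A + (N-2-A) = N-2 by omega] at hcN20 hcN21
  have hcN20' : c (N-2) 0 = A + m := by rw [hcN20]; omega
  have hcN21' : c (N-2) 1 = m := by rw [hcN21]
  have hdN2 : d (N-2) = 0 := hqN2.2.2
  have hcN1 : c (N-1) 0 = A + m + 1 ∧ c (N-1) 1 = m := by
    have h := hcs (N-2)
    rw [show N - 2 + 1 = N - 1 by omega] at h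
    constructor
    · rw [h, hdN2, Function.update_self, hcN20']
    · rw [h, hdN2, Function.update_of_ne (by decide : (1:Fin 2) ≠ 0), hcN21']
  obtain ⟨hd3, hl3, _⟩ := F3 _ hqN1
  have hcN : c N 0 = A + m + 1 := by
    have h := hcs (N-1)
    rw [show N - 1 + 1 = N by omega] at h
    rw [h, hd3, Function.update_of_ne (by decide : (0:Fin 2) ≠ 1), hcN1.1]
  -- tail counters
  have tailc : ∀ t, c (N+t) 0 = A + m + 1 + t := by
    intro t
    induction t with
    | zero => simpa using hcN
    | succ t ih =>
      have hd := (F4 _ (tail4 t)).1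
      rw [show N+(t+1) = (N+t)+1 by omega, hcs (N+t), hd, Function.update_self, ih]
      omega
  refine ⟨A - 1, m, ?_, ?_, ?_, ?_, ?_, ?_⟩
  · intro j hj
    obtain ⟨hqj, hcj0, _⟩ := inv1 j (by omega)
    obtain ⟨hd, hor⟩ := F0 _ hqj
    rcases hor with ⟨hl, hq'⟩ | ⟨hl, hq'⟩
    · rwa [hcj0] at hl
    · exact absurd hq' (hAmin (j+1) (by omega))
  · exact bdryA.1
  · intro j hj
    constructor
    · obtain ⟨hqt, hct0, _⟩ := inv2 (2*j) (by omega)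
      rw [if_pos (by omega)] at hqt
      obtain ⟨hd, hor⟩ := F1 _ hqt
      rcases hor with ⟨hl, hq'⟩ | ⟨hl, hq'⟩
      · rw [hct0, show A + (2*j+1)/2 = A + j by omega] at hl
        rw [show A - 1 + 1 + j = A + j by omega]
        exact hl
      · exfalso
        have := hq3unique _ hq'
        omega
    · obtain ⟨hqt, _, hct1⟩ := inv2 (2*j+1) (by omega)
      rw [if_neg (by omega)] at hqt
      obtain ⟨hd, hl, hq'⟩ := F2 _ hqt
      rw [hct1, show (2*j+1)/2 = j by omega] at hl
      exact hl
  · obtain ⟨hl, _⟩ := hqN2.2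
    rw [hcN20'] at hl
    rw [show A - 1 + 1 + m = A + m by omega]
    exact hl
  · rwa [hcN1.2] at hl3
  · intro j hj
    have hj' : j = A + m + 1 + (j - (A+m+1)) := by omega
    obtain ⟨_, hl, _⟩ := F4 _ (tail4 (j - (A+m+1)))
    rw [tailc] at hl
    rw [hj']
    exact hl

end NapaCE

namespace NapaCE

lemma lang_inter : A1.lang ∩ A2.lang = L := by
  apply Set.eq_of_subset_of_subset
  · rintro w ⟨h1, h2⟩
    obtain ⟨n, hab, hb, htail⟩ := A1_sound w h1
    obtain ⟨n', m, h2a, h2b, h2c, h2d, h2e, h2f⟩ := A2_sound w h2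
    have hnn : n' = n := by
      rcases lt_trichotomy n' n with h | h | h
      · have h3 := (hab n' h).1
        rw [h2b] at h3
        exact absurd h3 (by simp)
      · exact h
      · have h3 := h2a n h
        rw [hb] at h3
        exact absurd h3 (by simp)
    rw [hnn] at h2a h2b h2c h2d
    replace h2f : ∀ j : ℕ, n + m + 2 ≤ j → w 0 j = true := fun j hj =>
      h2f j (by omega)
    have hmn : m = n := by
      rcases lt_trichotomy m n with h | h | h
      · have h3 := (hab m h).2
        rw [h2e] at h3
        exact absurd h3 (by simp)
      · exact h
      · have h3 := (h2c n h).2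
        rw [htail n le_rfl] at h3
        exact absurd h3 (by simp)
    rw [hmn] at h2c h2d h2e
    replace h2f : ∀ j : ℕ, n + n + 2 ≤ j → w 0 j = true := fun j hj =>
      h2f j (by omega)
    refine ⟨n, ?_⟩
    apply fin2_funext
    · rw [Matrix.cons_val_zero]
      funext i
      rcases lt_trichotomy i n with h | h | h
      · rw [(hab i h).1]
        symm
        simp only [u, decide_eq_false_iff_not]
        omega
      · subst h
        rw [hb]
        simp [u]
      · rcases Nat.lt_or_ge i (2*n+1) with h' | h'
        · have hj : i = n + 1 + (i - n - 1) := by omega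
          rw [hj, (h2c (i - n - 1) (by omega)).1]
          symm
          simp only [u, decide_eq_false_iff_not]
          omega
        · rcases Nat.eq_or_lt_of_le h' with h'' | h''
          · rw [show i = n + 1 + n by omega, h2d]
            symm
            simp only [u, decide_eq_true_eq]
            omega
          · rw [h2f i (by omega)]
            symm
            simp only [u, decide_eq_true_eq]
            omega
    · rw [Matrix.cons_val_one, Matrix.cons_val_zero]
      funext i
      rcases Nat.lt_or_ge i n with h | h
      · rw [(hab i h).2]
        symm
        simp only [v, decide_eq_false_iff_not]
        omega
      · rw [htail i h]
        symm
        simp only [v, decide_eq_true_eq]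
        omega
  · rintro w ⟨p, rfl⟩
    exact ⟨mem_A1 p, mem_A2 p⟩

end NapaCE

namespace NapaCE

lemma not_napa (Q : Type) (instQ : Fintype Q) (B : AAPA Bool Q 2)
    (hB : B.IsNondet) : B.lang ≠ L := by
  intro hL
  have hmem : ∀ p : ℕ, (![u p, v p] : Fin 2 → ℕ → Bool) ∈ B.lang := by
    rw [hL]; exact fun p => ⟨p, rfl⟩
  have hall := fun p => (B.mem_lang_iff hB _).mp (hmem p)
  choose q d c hc0 hcs hinit htrans hpar using hall
  have hc00 : ∀ p (e : Fin 2), c p 0 e = 0 := fun p e => by rw [hc0 p]; rfl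
  -- every run must advance the first counter past position p
  have hreach : ∀ p, 1 ≤ p → ∃ i, c p i 0 = p + 1 := by
    intro p hp
    by_contra hno
    push_neg at hno
    have hbound : ∀ i, c p i 0 ≤ p := by
      intro i
      induction i with
      | zero => rw [hc00]; omega
      | succ j ih =>
        have hs1 := cnt_succ_le (hcs p) j 0
        have hs2 := hno (j+1)
        omega
    have hy : (![fun i => decide (p ≤ i), v p] : Fin 2 → ℕ → Bool) ∈ B.lang := by
      rw [B.mem_lang_iff hB]
      refine ⟨q p, d p, c p, hc0 p, hcs p, hinit p, ?_, hpar p⟩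
      intro i
      have h := htrans p i
      rcases fin2_or (d p i) with hd | hd <;> rw [hd] at h ⊢
      · have heq : (![fun i => decide (p ≤ i), v p] : Fin 2 → ℕ → Bool) 0 (c p i 0)
            = (![u p, v p] : Fin 2 → ℕ → Bool) 0 (c p i 0) := by
          simp only [Matrix.cons_val_zero, u]
          rw [decide_eq_decide]
          have := hbound i
          omega
        rw [heq]; exact h
      · have heq : (![fun i => decide (p ≤ i), v p] : Fin 2 → ℕ → Bool) 1 (c p i 1)
            = (![u p, v p] : Fin 2 → ℕ → Bool) 1 (c p i 1) := by
          simp only [Matrix.cons_val_one, Matrix.head_cons, Matrix.cons_val_zero]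
        rw [heq]; exact h
    rw [hL] at hy
    obtain ⟨k, hk⟩ := hy
    have e1 := congrFun (congrFun hk 1) p
    have e2 := congrFun (congrFun hk 1) (p-1)
    have e3 := congrFun (congrFun hk 0) (p+1)
    simp only [Matrix.cons_val_one, Matrix.head_cons, Matrix.cons_val_zero, Matrix.cons_val_zero, v, u,
      decide_eq_decide] at e1 e2 e3
    omega
  -- pigeonhole on the checkpoint states
  have key : ∀ n m : ℕ, ∀ (hn : 1 ≤ n) (hm : n < m),
      q n (Nat.find (hreach n hn)) = q m (Nat.find (hreach m (by omega))) → False := by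
    intro n m hn hm hst
    set Tn := Nat.find (hreach n hn) with hTndef
    set Tm := Nat.find (hreach m (show 1 ≤ m by omega)) with hTmdef
    have hTn : c n Tn 0 = n + 1 := Nat.find_spec (hreach n hn)
    have hTm : c m Tm 0 = m + 1 := Nat.find_spec (hreach m (show 1 ≤ m by omega))
    have hTn1 : 1 ≤ Tn := by
      rcases Nat.eq_zero_or_pos Tn with h | h
      · rw [h, hc00] at hTn; omega
      · exact h
    -- before the checkpoint, counter 0 stays ≤ n
    have hpre : ∀ i, i < Tn → c n i 0 ≤ n := by
      intro i
      induction i with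
      | zero => intro _; rw [hc00]; omega
      | succ j ih =>
        intro hj
        have h1 := ih (by omega)
        have h2 := cnt_succ_le (hcs n) j 0
        have h3 : ¬ (c n (j+1) 0 = n + 1) := Nat.find_min (hreach n hn) hj
        omega
    set kn := c n Tn 1 with hkn
    set km := c m Tm 1 with hkm
    have hpre1 : ∀ i, i < Tn → d n i = 1 → c n i 1 < kn := by
      intro i hi hd
      have h1 : c n (i+1) 1 = c n i 1 + 1 := by
        rw [hcs n i, hd, Function.update_self]
      have h2 : c n (i+1) 1 ≤ c n Tn 1 := cnt_mono (hcs n) (by omega) 1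
      omega
    have hm0 : ∀ j, Tm ≤ j → m + 1 ≤ c m j 0 := by
      intro j hj
      have := cnt_mono (hcs m) hj (0 : Fin 2)
      omega
    have hm1 : ∀ j, Tm ≤ j → km ≤ c m j 1 := by
      intro j hj
      exact cnt_mono (hcs m) hj 1
    -- the spliced input word
    set y : Fin 2 → ℕ → Bool :=
      ![fun i => if i ≤ n then u n i else u m (i - n + m),
        fun i => if i < kn then v n i else v m (i - kn + km)] with hydef
    -- the spliced run
    set Q' : ℕ → Q := fun i => if i < Tn then q n i else q m (i - Tn + Tm) with hQ'def
    set D' : ℕ → Fin 2 := fun i => if i < Tn then d n i else d m (i - Tn + Tm) with hD'def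
    set C' : ℕ → Fin 2 → ℕ := fun i => if i < Tn then c n i else
      ![c m (i - Tn + Tm) 0 - (m - n), c m (i - Tn + Tm) 1 - km + kn] with hC'def
    have hQle : ∀ i, i ≤ Tn → Q' i = q n i := by
      intro i hi
      rcases Nat.lt_or_ge i Tn with h | h
      · simp only [hQ'def, if_pos h]
      · have hieq : i = Tn := by omega
        rw [hieq]
        simp only [hQ'def, if_neg (lt_irrefl Tn)]
        rw [show Tn - Tn + Tm = Tm by omega]
        exact hst.symm
    have hCle : ∀ i, i ≤ Tn → C' i = c n i := by
      intro i hi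
      rcases Nat.lt_or_ge i Tn with h | h
      · simp only [hC'def, if_pos h]
      · have hieq : i = Tn := by omega
        rw [hieq]
        simp only [hC'def, if_neg (lt_irrefl Tn)]
        rw [show Tn - Tn + Tm = Tm by omega]
        apply fin2_funext
        · simp only [Matrix.cons_val_zero]
          rw [hTn, hTm]
          omega
        · simp only [Matrix.cons_val_one, Matrix.head_cons, Matrix.cons_val_zero]
          rw [← hkm, ← hkn]
          omega
    have hQgt : ∀ i, Tn ≤ i → Q' i = q m (i - Tn + Tm) := by
      intro i hi
      rcases Nat.lt_or_ge i Tn with h | h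
      · omega
      · rcases Nat.eq_or_lt_of_le h with h' | h'
        · rw [← h', show Tn - Tn + Tm = Tm by omega, hQle Tn (le_refl Tn)]
          exact hst
        · simp only [hQ'def, if_neg (by omega : ¬ (i < Tn))]
    have hy : y ∈ B.lang := by
      rw [B.mem_lang_iff hB]
      refine ⟨Q', D', C', ?_, ?_, ?_, ?_, ?_⟩
      · rw [hCle 0 (by omega)]
        exact hc0 n
      · intro i
        rcases Nat.lt_or_ge i Tn with h | h
        · have h1 : C' (i+1) = c n (i+1) := hCle (i+1) (by omega)
          have h2 : C' i = c n i := hCle i (by omega)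
          have h3 : D' i = d n i := by simp only [hD'def, if_pos h]
          rw [h1, h2, h3]
          exact hcs n i
        · have hj1 : i + 1 - Tn + Tm = (i - Tn + Tm) + 1 := by omega
          have h1 : C' (i+1) = ![c m ((i - Tn + Tm)+1) 0 - (m - n),
              c m ((i - Tn + Tm)+1) 1 - km + kn] := by
            simp only [hC'def, if_neg (by omega : ¬ (i + 1 < Tn)), hj1]
          have h2 : C' i = ![c m (i - Tn + Tm) 0 - (m - n),
              c m (i - Tn + Tm) 1 - km + kn] := by
            rcases Nat.eq_or_lt_of_le h with h' | h'
            · rw [← h', hCle Tn (le_refl Tn)]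
              rw [show Tn - Tn + Tm = Tm by omega]
              apply fin2_funext
              · simp only [Matrix.cons_val_zero]
                rw [hTn, hTm]
                omega
              · simp only [Matrix.cons_val_one, Matrix.head_cons, Matrix.cons_val_zero, ← hkm, ← hkn]
                omega
            · simp only [hC'def, if_neg (by omega : ¬ (i < Tn))]
          have h3 : D' i = d m (i - Tn + Tm) := by
            simp only [hD'def, if_neg (by omega : ¬ (i < Tn))]
          set j := i - Tn + Tm with hjdef
          have hjm : Tm ≤ j := by omega
          rw [h1, h2, h3]
          apply fin2_funext
          · rcases fin2_or (d m j) with hd | hd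
            · rw [hd, Function.update_self]
              simp only [Matrix.cons_val_zero]
              have hc1 : c m (j+1) 0 = c m j 0 + 1 := by
                rw [hcs m j, hd, Function.update_self]
              have := hm0 j hjm
              rw [hc1]
              omega
            · rw [hd, Function.update_of_ne (by decide : (0 : Fin 2) ≠ 1)]
              simp only [Matrix.cons_val_zero]
              have hc1 : c m (j+1) 0 = c m j 0 := by
                rw [hcs m j, hd, Function.update_of_ne (by decide : (0 : Fin 2) ≠ 1)]
              rw [hc1]
          · rcases fin2_or (d m j) with hd | hd
            · rw [hd, Function.update_of_ne (by decide : (1 : Fin 2) ≠ 0)]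
              simp only [Matrix.cons_val_one, Matrix.head_cons, Matrix.cons_val_zero]
              have hc1 : c m (j+1) 1 = c m j 1 := by
                rw [hcs m j, hd, Function.update_of_ne (by decide : (1 : Fin 2) ≠ 0)]
              rw [hc1]
            · rw [hd, Function.update_self]
              simp only [Matrix.cons_val_one, Matrix.head_cons, Matrix.cons_val_zero]
              have hc1 : c m (j+1) 1 = c m j 1 + 1 := by
                rw [hcs m j, hd, Function.update_self]
              have := hm1 j hjm
              rw [hc1]
              omega
      · rw [hQle 0 (by omega)]
        exact hinit n
      · intro i
        rcases Nat.lt_or_ge i Tn with h | h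
        · have h0 : Q' i = q n i := hQle i (by omega)
          have h1 : Q' (i+1) = q n (i+1) := hQle (i+1) (by omega)
          have h2 : C' i = c n i := hCle i (by omega)
          have h3 : D' i = d n i := by simp only [hD'def, if_pos h]
          rw [h0, h1, h2, h3]
          have hlet : y (d n i) (c n i (d n i))
              = (![u n, v n] : Fin 2 → ℕ → Bool) (d n i) (c n i (d n i)) := by
            rcases fin2_or (d n i) with hd | hd <;> rw [hd]
            · simp only [hydef, Matrix.cons_val_zero]
              rw [if_pos (hpre i h)]
            · simp only [hydef, Matrix.cons_val_one, Matrix.head_cons, Matrix.cons_val_zero]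
              rw [if_pos (hpre1 i h hd)]
          rw [hlet]
          exact htrans n i
        · have h0 : Q' i = q m (i - Tn + Tm) := hQgt i h
          have h1 : Q' (i+1) = q m ((i - Tn + Tm) + 1) := by
            rw [hQgt (i+1) (by omega), show i + 1 - Tn + Tm = (i - Tn + Tm) + 1 by omega]
          have h2 : C' i = ![c m (i - Tn + Tm) 0 - (m - n),
              c m (i - Tn + Tm) 1 - km + kn] := by
            rcases Nat.eq_or_lt_of_le h with h' | h'
            · rw [← h', hCle Tn (le_refl Tn)]
              rw [show Tn - Tn + Tm = Tm by omega]
              apply fin2_funext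
              · simp only [Matrix.cons_val_zero]
                rw [hTn, hTm]
                omega
              · simp only [Matrix.cons_val_one, Matrix.head_cons, Matrix.cons_val_zero, ← hkm, ← hkn]
                omega
            · simp only [hC'def, if_neg (by omega : ¬ (i < Tn))]
          have h3 : D' i = d m (i - Tn + Tm) := by
            simp only [hD'def, if_neg (by omega : ¬ (i < Tn))]
          set j := i - Tn + Tm with hjdef
          have hjm : Tm ≤ j := by omega
          rw [h0, h1, h2, h3]
          have hlet : y (d m j) ((![c m j 0 - (m - n), c m j 1 - km + kn] : Fin 2 → ℕ)
                (d m j))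
              = (![u m, v m] : Fin 2 → ℕ → Bool) (d m j) (c m j (d m j)) := by
            rcases fin2_or (d m j) with hd | hd <;> rw [hd]
            · simp only [hydef, Matrix.cons_val_zero]
              have hb := hm0 j hjm
              rw [if_neg (by omega : ¬ (c m j 0 - (m - n) ≤ n)),
                show c m j 0 - (m - n) - n + m = c m j 0 by omega]
            · simp only [hydef, Matrix.cons_val_one, Matrix.head_cons, Matrix.cons_val_zero]
              have hb := hm1 j hjm
              rw [if_neg (by omega : ¬ (c m j 1 - km + kn < kn)),
                show c m j 1 - km + kn - kn + km = c m j 1 by omega]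
          rw [hlet]
          exact htrans m j
      · have hEq : infOcc (fun i => B.prio (Q' i)) = infOcc (fun i => B.prio (q m i)) := by
          apply infOcc_shift _ _ Tn Tm
          intro i
          rw [hQgt (Tn + i) (by omega), show Tn + i - Tn + Tm = Tm + i by omega]
        have h1 : Even (sInf (infOcc (fun i => B.prio (q m i)))) := hpar m
        rw [← hEq] at h1
        exact h1
    rw [hL] at hy
    obtain ⟨k, hk⟩ := hy
    have e1 := congrFun (congrFun hk 0) n
    have e2 := congrFun (congrFun hk 0) (2*n+1)
    simp only [hydef, Matrix.cons_val_zero] at e1 e2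
    rw [if_pos (le_refl n)] at e1
    rw [if_neg (by omega : ¬ (2*n+1 ≤ n)), show 2*n+1 - n + m = n+1+m by omega] at e2
    simp only [u, decide_eq_decide] at e1 e2
    have e1' : n = k ∨ 2*k < n := e1.mp (Or.inl trivial)
    have e2' : ¬ (2*n+1 = k ∨ 2*k < 2*n+1) := fun hc => by
      have h9 := e2.mpr hc
      omega
    rcases e1' with h9 | h9 <;> omega
  obtain ⟨x, z, hxz, hs⟩ := Finite.exists_ne_map_eq_of_infinite
    (fun x : ℕ => q (x+1) (Nat.find (hreach (x+1) (by omega))))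
  rcases Nat.lt_or_ge x z with h | h
  · exact key (x+1) (z+1) (by omega) (by omega) hs
  · have hzx : z < x := by omega
    exact key (z+1) (x+1) (by omega) (by omega) hs.symm

end NapaCE

/-- NAPA are not closed under intersection: there exist a finite
alphabet `σ` and two NAPA `A₁`, `A₂` over `σ` with two directions such that no NAPA
over `σ` with two directions recognizes `L(A₁) ∩ L(A₂)`. -/
theorem napa_not_closed_under_intersection :
    ∃ (σ : Type) (_ : Fintype σ) (Q₁ Q₂ : Type) (_ : Fintype Q₁) (_ : Fintype Q₂)
      (_ : Nonempty Q₁) (_ : Nonempty Q₂)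
      (A₁ : AAPA σ Q₁ 2) (A₂ : AAPA σ Q₂ 2),
      A₁.IsNondet ∧ A₂.IsNondet ∧
      ∀ (Q : Type) (_ : Fintype Q) (_ : Nonempty Q) (B : AAPA σ Q 2),
        B.IsNondet → B.lang ≠ A₁.lang ∩ A₂.lang := by
  refine ⟨Bool, inferInstance, Fin 3, Fin 5, inferInstance, inferInstance, ⟨0⟩, ⟨0⟩,
    NapaCE.A1, NapaCE.A2, NapaCE.A1_nondet, NapaCE.A2_nondet, ?_⟩
  intro Q instQ _ B hB hEq
  exact NapaCE.not_napa Q instQ B hB (hEq.trans NapaCE.lang_inter)
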